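/- arXiv:1410.3786 — 3 statements merged into one kernel-verified Lean document; each statement's English description precedes it below -/
import Mathlib

section
/- Let f_c ≠ 0 and consider two targets k and ℓ with time shifts τ_k, τ_ℓ, frequency shifts f_k, f_ℓ, and target phases φ_k, φ_ℓ. Define ν_k¹ = f_k − 2 f_c τ_k, ν_k² = f_k + 2 f_c τ_k, ψ_k¹ = φ_k + f_c τ_k², ψ_k² = φ_k − f_c τ_k² (and similarly for ℓ), and the hypothesized time shifts τ_h(k, ℓ) = (ν_k¹ − ν_ℓ²)/(−4 f_c) and τ_h(ℓ, k) = (ν_ℓ¹ − ν_k²)/(−4 f_c). If both cross-matching phase conditions hold, namely τ_h(k, ℓ)² = (ψ_k¹ − ψ_ℓ²)/(2 f_c) and τ_h(ℓ, k)² = (ψ_ℓ¹ − ψ_k²)/(2 f_c), then |f_k − f_ℓ| = 2 |f_c| · |τ_k − τ_ℓ|. -/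
/-- If both cross-matching phase conditions hold for two targets `k` and `ℓ`
observed with a positive–negative chirp pair of rate `f_c`, then the target
parameters satisfy the ambiguity condition `|f_k - f_ℓ| = 2 |f_c| |τ_k - τ_ℓ|`. -/
theorem ambiguity_condition (f_c τk τl fk fl φk φl : ℝ) (hfc : f_c ≠ 0)
    (νk₁ νk₂ νl₁ νl₂ ψk₁ ψk₂ ψl₁ ψl₂ τh_kl τh_lk : ℝ)
    (hνk₁ : νk₁ = fk - 2 * f_c * τk) (hνk₂ : νk₂ = fk + 2 * f_c * τk)
    (hνl₁ : νl₁ = fl - 2 * f_c * τl) (hνl₂ : νl₂ = fl + 2 * f_c * τl)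
    (hψk₁ : ψk₁ = φk + f_c * τk ^ 2) (hψk₂ : ψk₂ = φk - f_c * τk ^ 2)
    (hψl₁ : ψl₁ = φl + f_c * τl ^ 2) (hψl₂ : ψl₂ = φl - f_c * τl ^ 2)
    (hτh_kl : τh_kl = (νk₁ - νl₂) / (-4 * f_c))
    (hτh_lk : τh_lk = (νl₁ - νk₂) / (-4 * f_c))
    (hmatch₁ : τh_kl ^ 2 = (ψk₁ - ψl₂) / (2 * f_c))
    (hmatch₂ : τh_lk ^ 2 = (ψl₁ - ψk₂) / (2 * f_c)) :
    |fk - fl| = 2 * |f_c| * |τk - τl| := by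
  subst hνk₁ hνk₂ hνl₁ hνl₂ hψk₁ hψk₂ hψl₁ hψl₂ hτh_kl hτh_lk
  have h4 : (4 : ℝ) * f_c ≠ 0 := by positivity
  have key : (fk - fl) ^ 2 = (2 * f_c * (τk - τl)) ^ 2 := by
    field_simp at hmatch₁ hmatch₂
    refine mul_left_cancel₀ h4 ?_
    linear_combination f_c * (hmatch₁ + hmatch₂)
  have habs : |fk - fl| = |2 * f_c * (τk - τl)| := (sq_eq_sq_iff_abs_eq_abs _ _).mp key
  rw [habs, abs_mul, abs_mul, abs_two]
end

section
/- Let f_c and f_c′ be two chirp rates with 0 < f_c, 0 < f_c′, and f_c ≠ f_c′, and consider two targets k and ℓ with time shifts τ_k, τ_ℓ, frequency shifts f_k, f_ℓ, and target phases φ_k, φ_ℓ. Suppose that for each of the two positive–negative chirp pairs (with rates ±f_c and ±f_c′) both cross-matching phase conditions hold, i.e., τ_h(k, ℓ)² = (ψ_k¹ − ψ_ℓ²)/(2 f_c) and τ_h(ℓ, k)² = (ψ_ℓ¹ − ψ_k²)/(2 f_c) for the pair with rate f_c, and the analogous two conditions for the pair with rate f_c′. Then τ_k = τ_ℓ and f_k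 = f_ℓ. That is, an ambiguity that persists under one chirp-rate pair is resolved by a second pair with a different chirp rate. -/
/-- An ambiguity that persists under one positive–negative chirp pair is resolved
by a second pair with a different chirp rate: if the cross-matching phase conditions
hold for two targets `k`, `ℓ` under both pairs (rates `±f_c` and `±f_c'` with
`0 < f_c`, `0 < f_c'`, `f_c ≠ f_c'`), then the two targets coincide in time shift
and frequency shift. -/
theorem second_chirp_pair_resolves_ambiguity
    (f_c f_c' τk τl fk fl φk φl : ℝ)
    (hfc : 0 < f_c) (hfc' : 0 < f_c') (hne : f_c ≠ f_c')
    (hmatch₁ : (((fk - 2 * f_c * τk) - (fl + 2 * f_c * τl)) / (-4 * f_c)) ^ 2 =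
      ((φk + f_c * τk ^ 2) - (φl - f_c * τl ^ 2)) / (2 * f_c))
    (hmatch₂ : (((fl - 2 * f_c * τl) - (fk + 2 * f_c * τk)) / (-4 * f_c)) ^ 2 =
      ((φl + f_c * τl ^ 2) - (φk - f_c * τk ^ 2)) / (2 * f_c))
    (hmatch₁' : (((fk - 2 * f_c' * τk) - (fl + 2 * f_c' * τl)) / (-4 * f_c')) ^ 2 =
      ((φk + f_c' * τk ^ 2) - (φl - f_c' * τl ^ 2)) / (2 * f_c'))
    (hmatch₂' : (((fl - 2 * f_c' * τl) - (fk + 2 * f_c' * τk)) / (-4 * f_c')) ^ 2 =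
      ((φl + f_c' * τl ^ 2) - (φk - f_c' * τk ^ 2)) / (2 * f_c')) :
    τk = τl ∧ fk = fl := by
  have hc : f_c ≠ 0 := ne_of_gt hfc
  have hc' : f_c' ≠ 0 := ne_of_gt hfc'
  have h1 : (fk - fl) ^ 2 = 4 * f_c ^ 2 * (τk - τl) ^ 2 := by
    field_simp at hmatch₁ hmatch₂
    refine mul_left_cancel₀ (a := 4 * f_c) (by positivity) ?_
    linear_combination f_c * (hmatch₁ + hmatch₂)
  have h2 : (fk - fl) ^ 2 = 4 * f_c' ^ 2 * (τk - τl) ^ 2 := by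
    field_simp at hmatch₁' hmatch₂'
    refine mul_left_cancel₀ (a := 4 * f_c') (by positivity) ?_
    linear_combination f_c' * (hmatch₁' + hmatch₂')
  have hd : τk = τl := by
    have hcc : f_c ^ 2 ≠ f_c' ^ 2 := by
      intro h
      exact hne (by nlinarith)
    have : (f_c ^ 2 - f_c' ^ 2) * (τk - τl) ^ 2 = 0 := by nlinarith
    rcases mul_eq_zero.mp this with h | h
    · exact absurd (by linarith : f_c ^ 2 = f_c' ^ 2) hcc
    · have := pow_eq_zero_iff (n := 2) (by norm_num) |>.mp h
      linarith
  refine ⟨hd, ?_⟩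
  have : (fk - fl) ^ 2 = 0 := by rw [h1, hd]; ring
  have := pow_eq_zero_iff (n := 2) (by norm_num) |>.mp this
  linarith
end

section
/- Let (Ω, ℱ, ℙ) be a probability space and let (γ_m)_{m≥1} be a sequence of independent real-valued, square-integrable random variables with mean zero and variances uniformly bounded by σ². Let (f_c^m)_{m≥1} be real chirp rates coming in positive–negative pairs, i.e., f_c^{m} = −f_c^{m−1} for every even m, and satisfying |f_c^m| ≥ c for some constant c > 0 and all m. Fix a target with frequency shift f ∈ ℝ and time shift τ ∈ ℝ, and for each even M define the estimator τ̂(M) = ( Σ_{m=1}^M (−2 f_c^m)( f − 2 f_c^m τ + γ_m ) ) / ( Σ_{m=1}^M 4 (f_c^m)² ). Then τ̂(M) converges to τ in probability as M → ∞ along even M: for every ε > 0, ℙ( |τ̂(M) − τ| > ε ) → 0. -/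
open MeasureTheory ProbabilityTheory Finset Filter

/-- Asymptotically perfect recovery of the time shift with noise: with chirp rates
in positive–negative pairs, bounded below in magnitude by `c > 0`, and independent
zero-mean frequency-estimation errors of uniformly bounded variance, the
least-squares estimator
`τ̂(M) = (Σ_{m<M} (-2 f_c^m)(f - 2 f_c^m τ + γ_m)) / (Σ_{m<M} 4 (f_c^m)²)`
converges to `τ` in probability as `M → ∞` along even `M`. -/
theorem time_shift_estimator_consistent
    {Ω : Type*} [MeasureSpace Ω] [IsProbabilityMeasure (ℙ : Measure Ω)]
    (γ : ℕ → Ω → ℝ)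
    (hindep : iIndepFun γ ℙ)
    (hL2 : ∀ m, MemLp (γ m) 2 ℙ)
    (σ : ℝ) (hmean : ∀ m, ∫ ω, γ m ω = 0)
    (hvar : ∀ m, ∫ ω, (γ m ω) ^ 2 ≤ σ ^ 2)
    (f_c : ℕ → ℝ) (hpair : ∀ m, Odd m → f_c m = -f_c (m - 1))
    (c : ℝ) (hc : 0 < c) (hlb : ∀ m, c ≤ |f_c m|)
    (f τ : ℝ)
    (τhat : ℕ → Ω → ℝ)
    (hτhat : ∀ M ω, τhat M ω =
      (∑ m ∈ Finset.range M, (-2 * f_c m) * (f - 2 * f_c m * τ + γ m ω)) /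
        (∑ m ∈ Finset.range M, 4 * f_c m ^ 2)) :
    ∀ ε > (0 : ℝ),
      Tendsto (fun j : ℕ => ℙ {ω | ε < |τhat (2 * j) ω - τ|}) atTop (nhds 0) := by
  intro ε hε
  -- the noise terms with coefficients
  set Y : ℕ → Ω → ℝ := fun m ω => (-2 * f_c m) * γ m ω with hYdef
  have hYL2 : ∀ m, MemLp (Y m) 2 ℙ := fun m => (hL2 m).const_mul _
  have hσ2 : (0:ℝ) ≤ σ ^ 2 :=
    le_trans (integral_nonneg fun ω => sq_nonneg _) (hvar 0)
  have hc2 : ∀ m, c ^ 2 ≤ f_c m ^ 2 := by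
    intro m
    have h := hlb m
    nlinarith [abs_nonneg (f_c m), sq_abs (f_c m)]
  -- variance bound on each Y m
  have hvarY : ∀ m, variance (Y m) ℙ ≤ 4 * f_c m ^ 2 * σ ^ 2 := by
    intro m
    have h1 : variance (Y m) ℙ = (-2 * f_c m) ^ 2 * variance (γ m) ℙ :=
      variance_const_mul _ _ _
    have h2 : variance (γ m) ℙ ≤ σ ^ 2 := by
      refine le_trans (variance_le_expectation_sq (hL2 m).aestronglyMeasurable) ?_
      simpa [Pi.pow_apply] using hvar m
    have h3 : (0:ℝ) ≤ variance (γ m) ℙ := variance_nonneg _ _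
    nlinarith [sq_nonneg (f_c m)]
  -- sum of chirp rates over an even range vanishes
  have hsum0 : ∀ j : ℕ, ∑ m ∈ Finset.range (2*j), f_c m = 0 := by
    intro j
    induction j with
    | zero => simp
    | succ j ih =>
      have h2 : 2 * (j+1) = (2*j + 1) + 1 := by ring
      rw [h2, Finset.sum_range_succ, Finset.sum_range_succ, ih]
      have hodd : f_c (2*j+1) = -f_c ((2*j+1) - 1) := hpair _ ⟨j, by ring⟩
      simp only [Nat.add_sub_cancel] at hodd
      rw [hodd]; ring
  -- lower bound on the denominator
  have hDge : ∀ M : ℕ, (M:ℝ) * (4*c^2) ≤ ∑ m ∈ Finset.range M, 4 * f_c m ^ 2 := by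
    intro M
    calc (M:ℝ) * (4*c^2) = ∑ _m ∈ Finset.range M, 4*c^2 := by
          simp [mul_comm]
      _ ≤ _ := Finset.sum_le_sum fun m _ => by have := hc2 m; linarith
  have hDpos : ∀ j : ℕ, 1 ≤ j → 0 < ∑ m ∈ Finset.range (2*j), 4 * f_c m ^ 2 := by
    intro j hj
    refine lt_of_lt_of_le ?_ (hDge (2*j))
    have : (1:ℝ) ≤ (j:ℝ) := by exact_mod_cast hj
    push_cast
    nlinarith
  -- key identity: τ̂ - τ = S / D
  have hkey : ∀ j : ℕ, 1 ≤ j → ∀ ω, τhat (2*j) ω - τ =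
      (∑ m ∈ Finset.range (2*j), Y m ω) / (∑ m ∈ Finset.range (2*j), 4 * f_c m ^ 2) := by
    intro j hj ω
    have hD := hDpos j hj
    rw [hτhat]
    have hnum : ∑ m ∈ Finset.range (2*j), (-2 * f_c m) * (f - 2 * f_c m * τ + γ m ω)
        = (-2*f) * (∑ m ∈ Finset.range (2*j), f_c m)
          + τ * (∑ m ∈ Finset.range (2*j), 4 * f_c m ^ 2)
          + ∑ m ∈ Finset.range (2*j), Y m ω := by
      rw [Finset.mul_sum, Finset.mul_sum, ← Finset.sum_add_distrib, ← Finset.sum_add_distrib]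
      exact Finset.sum_congr rfl fun m _ => by simp only [hYdef]; ring
    rw [hnum, hsum0 j]
    field_simp
    ring
  -- mean of the sum S is zero
  have hmeanS : ∀ j : ℕ, ∫ ω, (∑ m ∈ Finset.range (2*j), Y m ω) = 0 := by
    intro j
    rw [integral_finset_sum _ (fun m _ => ((hYL2 m).integrable one_le_two))]
    refine Finset.sum_eq_zero fun m _ => ?_
    simp only [hYdef]
    rw [integral_const_mul, hmean m, mul_zero]
  -- Chebyshev bound
  set B : ℝ := σ^2 / (ε^2 * (8*c^2)) with hBdef
  have hcheb : ∀ j : ℕ, 1 ≤ j →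
      ℙ {ω | ε < |τhat (2*j) ω - τ|} ≤ ENNReal.ofReal (B / j) := by
    intro j hj
    set D : ℝ := ∑ m ∈ Finset.range (2*j), 4 * f_c m ^ 2 with hDdef
    have hD : 0 < D := hDpos j hj
    set S : Ω → ℝ := fun ω => ∑ m ∈ Finset.range (2*j), Y m ω with hSdef
    have hSL2 : MemLp S 2 ℙ :=
      memLp_finset_sum (Finset.range (2*j)) (fun m _ => hYL2 m)
    have hsub : {ω | ε < |τhat (2*j) ω - τ|} ⊆ {ω | ε * D ≤ |S ω - ∫ x, S x|} := by
      intro ω hω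
      simp only [Set.mem_setOf_eq] at hω ⊢
      rw [hmeanS j, sub_zero]
      rw [hkey j hj ω] at hω
      have : ε * D < |S ω / D| * D := by
        exact mul_lt_mul_of_pos_right hω hD
      rw [abs_div, abs_of_pos hD, div_mul_cancel₀ _ hD.ne'] at this
      exact this.le
    have hvarS : variance S ℙ ≤ σ^2 * D := by
      have h1 : variance S ℙ = ∑ m ∈ Finset.range (2*j), variance (Y m) ℙ := by
        have hpi : S = ∑ m ∈ Finset.range (2*j), Y m := by
          funext ω; simp [hSdef, Finset.sum_apply]
        rw [hpi]
        refine IndepFun.variance_sum (fun m _ => hYL2 m) ?_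
        intro i _ k _ hik
        exact (hindep.indepFun hik).comp
          (measurable_const_mul _) (measurable_const_mul _)
      rw [h1, hDdef, Finset.mul_sum]
      exact Finset.sum_le_sum fun m _ => by
        have := hvarY m; linarith [this]
    have hεD : 0 < ε * D := mul_pos hε hD
    calc ℙ {ω | ε < |τhat (2*j) ω - τ|}
        ≤ ℙ {ω | ε * D ≤ |S ω - ∫ x, S x|} := measure_mono hsub
      _ ≤ ENNReal.ofReal (variance S ℙ / (ε * D)^2) :=
          meas_ge_le_variance_div_sq hSL2 hεD
      _ ≤ ENNReal.ofReal (B / j) := by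
          apply ENNReal.ofReal_le_ofReal
          have hDj : (8:ℝ) * c^2 * j ≤ D := by
            refine le_trans ?_ (hDge (2*j))
            push_cast; nlinarith
          have hjpos : (0:ℝ) < (j:ℝ) := by exact_mod_cast hj
          have step1 : variance S ℙ / (ε * D)^2 ≤ σ^2 / (ε^2 * D) := by
            rw [mul_pow]
            rw [div_le_div_iff₀ (by positivity) (by positivity)]
            nlinarith [mul_le_mul_of_nonneg_right hvarS
              (le_of_lt (mul_pos (pow_pos hε 2) hD))]
          refine step1.trans ?_
          rw [hBdef, div_div]
          apply div_le_div_of_nonneg_left hσ2 (by positivity)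
          nlinarith
  -- squeeze
  have hlim : Tendsto (fun j : ℕ => ENNReal.ofReal (B / j)) atTop (nhds 0) := by
    rw [← ENNReal.ofReal_zero]
    exact ENNReal.tendsto_ofReal (tendsto_const_div_atTop_nhds_zero_nat B)
  refine tendsto_of_tendsto_of_tendsto_of_le_of_le' tendsto_const_nhds hlim ?_ ?_
  · exact Filter.Eventually.of_forall fun j => zero_le
  · filter_upwards [eventually_ge_atTop 1] with j hj using hcheb j hj
end
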